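/- Let K be a field, R₁ = K[X]/(X²), and S a commutative ring. If every S-module N fits in a short exact sequence 0 → N → Q → N → 0 of S-modules with pd_S(Q) ≤ n, then every (R₁ × S)-module M fits in a short exact sequence 0 → M → P → M → 0 of (R₁ × S)-modules with pd_{R₁ × S}(P) ≤ n. -/

import Mathlib

universe u

/-- Projective dimension of the module `M` is at most `n`. -/
def pdLE (R : Type u) [CommRing R] : ℕ → (M : Type u) → [AddCommGroup M] → [Module R M] → Prop
  | 0, M, _, _ => Module.Projective R M
  | n+1, M, _, _ => ∃ (P : Type u) (_ : AddCommGroup P) (_ : Module R P) (f : P →ₗ[R] M),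
      Module.Projective R P ∧ Function.Surjective f ∧ pdLE R n (LinearMap.ker f)

/-- The ring `K[X]/(X²)`. -/
def DualNumbersRing (K : Type u) [Field K] : Type u :=
  Polynomial K ⧸ Ideal.span {(Polynomial.X ^ 2 : Polynomial K)}

noncomputable instance (K : Type u) [Field K] : CommRing (DualNumbersRing K) :=
  Ideal.Quotient.commRing _

section Dual
open Polynomial TensorProduct
variable (K : Type u) [Field K]

theorem dual_root_sq : AdjoinRoot.root (X ^ 2 : K[X]) * AdjoinRoot.root (X ^ 2 : K[X]) = 0 := by
  have h := AdjoinRoot.mk_self (f := (X ^ 2 : K[X]))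
  rw [map_pow, AdjoinRoot.mk_X] at h
  rw [← pow_two]
  exact h

theorem dual_decomp (r : AdjoinRoot (X ^ 2 : K[X])) :
    ∃ a b : K, r = algebraMap K _ a + b • AdjoinRoot.root (X ^ 2 : K[X]) := by
  induction r using AdjoinRoot.induction_on with
  | ih p =>
    refine ⟨(p %ₘ X ^ 2).coeff 0, (p %ₘ X ^ 2).coeff 1, ?_⟩
    have hmod : AdjoinRoot.mk (X ^ 2 : K[X]) p = AdjoinRoot.mk _ (p %ₘ X ^ 2) := by
      rw [AdjoinRoot.mk_eq_mk]
      exact ⟨p /ₘ X ^ 2, by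
        have := modByMonic_add_div p (X ^ 2 : K[X])
        linear_combination -this⟩
    have hdeg : (p %ₘ X ^ 2).degree ≤ 1 := by
      have h2 := degree_modByMonic_lt p (monic_X_pow (R := K) 2)
      rw [degree_X_pow] at h2
      exact Order.le_of_lt_succ (by exact_mod_cast h2)
    rw [hmod]
    conv_lhs => rw [eq_X_add_C_of_degree_le_one hdeg]
    rw [map_add, map_mul, AdjoinRoot.mk_X, add_comm, AdjoinRoot.algebraMap_eq,
      Algebra.smul_def, AdjoinRoot.algebraMap_eq]
    rfl

/-- the "coefficient of the root" functional -/
noncomputable def ct : AdjoinRoot (X ^ 2 : K[X]) →ₗ[K] K :=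
  (lcoeff K 1) ∘ₗ AdjoinRoot.modByMonicHom (monic_X_pow 2)

theorem ct_one : ct K 1 = 0 := by
  have h1 : (1 : AdjoinRoot (X ^ 2 : K[X])) = AdjoinRoot.mk _ (1 : K[X]) := by
    rw [map_one]
  rw [ct, LinearMap.comp_apply, h1, AdjoinRoot.modByMonicHom_mk]
  rw [(modByMonic_eq_self_iff (monic_X_pow 2)).2 (by
    rw [degree_X_pow, degree_one]; exact_mod_cast Nat.zero_lt_two)]
  simp [coeff_one]

theorem ct_root : ct K (AdjoinRoot.root (X ^ 2 : K[X])) = 1 := by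
  have h1 : AdjoinRoot.root (X ^ 2 : K[X]) = AdjoinRoot.mk _ (X : K[X]) := by
    rw [AdjoinRoot.mk_X]
  rw [ct, LinearMap.comp_apply, h1, AdjoinRoot.modByMonicHom_mk]
  rw [(modByMonic_eq_self_iff (monic_X_pow 2)).2 (by
    rw [degree_X_pow, degree_X]; exact_mod_cast Nat.lt_succ_self 1)]
  simp

theorem dual_ses (A : Type u) [AddCommGroup A] [Module (AdjoinRoot (X ^ 2 : K[X])) A] :
    ∃ (F : Type u) (_ : AddCommGroup F) (_ : Module (AdjoinRoot (X ^ 2 : K[X])) F)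
      (i : A →ₗ[AdjoinRoot (X ^ 2 : K[X])] F) (p : F →ₗ[AdjoinRoot (X ^ 2 : K[X])] A),
      Module.Projective (AdjoinRoot (X ^ 2 : K[X])) F ∧ Function.Injective i ∧
        Function.Surjective p ∧ Function.Exact i p := by
  letI R1 := AdjoinRoot (X ^ 2 : K[X])
  letI : Module K A := Module.compHom A (algebraMap K R1)
  haveI : IsScalarTower K R1 A := ⟨fun k r a => by
    show ((k • r) : R1) • a = (algebraMap K R1 k) • (r • a)
    rw [Algebra.smul_def, mul_smul]⟩
  set t : R1 := AdjoinRoot.root _ with ht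
  have ht2 : t * t = 0 := dual_root_sq K
  have hksmul : ∀ (k : K) (a : A), k • a = (algebraMap K R1 k) • a := fun k a => rfl
  let T : A →ₗ[K] A :=
    { toFun := fun a => t • a
      map_add' := fun a b => smul_add _ _ _
      map_smul' := fun k a => by
        simp only [RingHom.id_apply, hksmul, smul_smul, mul_comm] }
  have hT2 : ∀ a, T (T a) = 0 := fun a => by
    show t • t • a = 0
    rw [smul_smul, ht2, zero_smul]
  obtain ⟨Co, hC⟩ := Submodule.exists_isCompl (LinearMap.ker T)
  let π : A →ₗ[K] A :=
    (LinearMap.ker T).subtype ∘ₗ (LinearMap.ker T).projectionOnto Co hC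
  have hπmem : ∀ a, π a ∈ LinearMap.ker T := fun a => Submodule.coe_mem _
  have hπid : ∀ a (h : a ∈ LinearMap.ker T), π a = a := fun a h => by
    show ((LinearMap.ker T).projectionOnto Co hC a : A) = a
    rw [show a = ((⟨a, h⟩ : LinearMap.ker T) : A) from rfl,
      Submodule.projectionOnto_apply_left hC]
  have hπT : ∀ a, π (T a) = T a := fun a => hπid _ (LinearMap.mem_ker.2 (hT2 a))
  have hTπ : ∀ a, T (π a) = 0 := fun a => LinearMap.mem_ker.1 (hπmem a)
  let g : A →ₗ[K] A := π + π - LinearMap.id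
  have hg : ∀ a, g a = π a + π a - a := fun a => rfl
  have hππ : ∀ b, π (π b) = π b := fun b => hπid _ (hπmem b)
  have hgT : ∀ a, g (T a) = T a := fun a => by simp only [hg, hπT]; abel
  have hTg : ∀ a, T (g a) = -T a := fun a => by
    simp only [hg, map_sub, map_add, hTπ]; abel
  have hgg : ∀ a, g (g a) = a := fun a => by
    simp only [hg, map_sub, map_add, hππ]; abel
  -- the free module
  letI F := R1 ⊗[K] A
  let p : F →ₗ[R1] A := LinearMap.liftBaseChange R1 g
  have hp : ∀ (r : R1) (a : A), p (r ⊗ₜ[K] a) = r • g a := fun r a => rfl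
  have hTsmul : ∀ a : A, t • a = T a := fun a => rfl
  let i : A →ₗ[R1] F :=
    { toFun := fun a => (1 : R1) ⊗ₜ[K] (T a) + t ⊗ₜ[K] a
      map_add' := fun a b => by
        rw [map_add, tmul_add, tmul_add]; abel
      map_smul' := fun r a => by
        obtain ⟨x, y, rfl⟩ := dual_decomp K r
        dsimp only [RingHom.id_apply]
        rw [← ht]
        have h1 : ((algebraMap K R1 x + y • t)) • a = x • a + y • T a := by
          rw [add_smul, algebraMap_smul, smul_assoc, hTsmul]
        rw [h1, map_add, map_smul, map_smul, hT2, smul_zero, add_zero, tmul_add]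
        rw [smul_add, smul_tmul', smul_tmul', smul_eq_mul, smul_eq_mul, mul_one,
          add_mul, smul_mul_assoc, ht2, smul_zero, add_zero, add_tmul,
          Algebra.algebraMap_eq_smul_one, smul_mul_assoc, one_mul, smul_tmul,
          smul_tmul, smul_tmul]
        abel }
  have hi : ∀ a, i a = (1 : R1) ⊗ₜ[K] (T a) + t ⊗ₜ[K] a := fun a => rfl
  let B : R1 →ₗ[K] A →ₗ[K] A :=
    { toFun := fun r => ct K r • LinearMap.id
      map_add' := fun r s => by rw [map_add, add_smul]
      map_smul' := fun k r => by rw [map_smul, RingHom.id_apply, smul_assoc] }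
  let φ : F →ₗ[K] A := TensorProduct.lift B
  have hφ : ∀ (r : R1) (a : A), φ (r ⊗ₜ[K] a) = ct K r • a := fun r a => rfl
  have hctt : ct K t = 1 := by rw [ht]; exact ct_root K
  have hretr : ∀ a, φ (i a) = a := fun a => by
    rw [hi, map_add, hφ, hφ, ct_one, hctt, zero_smul, one_smul, zero_add]
  have hiinj : Function.Injective i := by
    intro a b hab
    have h2 := congrArg φ hab
    rwa [hretr, hretr] at h2
  have hpsurj : Function.Surjective p := fun a =>
    ⟨(1 : R1) ⊗ₜ[K] (g a), by rw [hp, one_smul, hgg]⟩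
  have hdec : ∀ w : F, ∃ u v : A, w = (1 : R1) ⊗ₜ[K] u + t ⊗ₜ[K] v := by
    intro w
    induction w using TensorProduct.induction_on with
    | zero => exact ⟨0, 0, by rw [tmul_zero, tmul_zero, add_zero]⟩
    | tmul r a =>
      obtain ⟨x, y, rfl⟩ := dual_decomp K r
      rw [← ht]
      exact ⟨x • a, y • a, by
        rw [add_tmul, Algebra.algebraMap_eq_smul_one, smul_tmul, smul_tmul]⟩
    | add w1 w2 h1 h2 =>
      obtain ⟨u1, v1, rfl⟩ := h1
      obtain ⟨u2, v2, rfl⟩ := h2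
      exact ⟨u1 + u2, v1 + v2, by rw [tmul_add, tmul_add]; abel⟩
  have hexact : Function.Exact i p := by
    intro w
    constructor
    · intro hw
      obtain ⟨u, v, rfl⟩ := hdec w
      rw [map_add, hp, hp, one_smul, hTsmul] at hw
      have h2 : g (g u + T (g v)) = 0 := by rw [hw, map_zero]
      rw [map_add, hgg, hgT, hTg] at h2
      rw [← sub_eq_add_neg, sub_eq_zero] at h2
      exact ⟨v, by rw [hi, h2]⟩
    · rintro ⟨v, rfl⟩
      rw [hi, map_add, hp, hp, one_smul, hTsmul, hgT, hTg]
      abel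
  exact ⟨F, inferInstance, inferInstance, i, p, inferInstance, hiinj, hpsurj, hexact⟩
end Dual


section ProdRing
variable {R₁ S : Type u} [CommRing R₁] [CommRing S]

theorem pdLE_congr {R : Type u} [CommRing R] : ∀ (n : ℕ) {M N : Type u} [AddCommGroup M]
    [Module R M] [AddCommGroup N] [Module R N], pdLE R n M → (M ≃ₗ[R] N) → pdLE R n N := by
  intro n
  induction n with
  | zero =>
    intro M N _ _ _ _ h e
    haveI : Module.Projective R M := h
    exact Module.Projective.of_equiv e
  | succ n ih =>
    intro M N _ _ _ _ h e
    obtain ⟨P, _, _, f, hP, hf, hker⟩ := h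
    refine ⟨P, ‹_›, ‹_›, e.toLinearMap ∘ₗ f, hP, e.surjective.comp hf, ?_⟩
    have hk : LinearMap.ker (e.toLinearMap ∘ₗ f) = LinearMap.ker f :=
      LinearMap.ker_comp_of_ker_eq_bot f e.ker
    rw [hk]
    exact hker

theorem Module.Projective.of_fst {A : Type u} [AddCommGroup A] [Module R₁ A]
    [Module (R₁ × S) A] (hsmul : ∀ (ρ : R₁ × S) (a : A), ρ • a = ρ.1 • a)
    (h : Module.Projective R₁ A) : Module.Projective (R₁ × S) A := by
  obtain ⟨s, hs⟩ := h.out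
  let s' : A →ₗ[R₁ × S] (A →₀ (R₁ × S)) :=
    { toFun := fun a => (s a).mapRange (fun r => ((r, 0) : R₁ × S)) rfl
      map_add' := fun a b => by
        rw [map_add]
        exact Finsupp.mapRange_add (fun x y => by rw [Prod.mk_add_mk, add_zero]) _ _
      map_smul' := fun ρ a => by
        dsimp only [RingHom.id_apply]
        rw [hsmul, map_smul]
        ext x <;>
          simp [Finsupp.mapRange_apply, Finsupp.smul_apply, smul_eq_mul, Prod.fst_mul,
            Prod.snd_mul] }
  refine ⟨s', fun a => ?_⟩
  have h1 : Finsupp.linearCombination (R₁ × S) (id : A → A) (s' a)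
      = (s a).sum fun x r => ((r, 0) : R₁ × S) • x := by
    rw [Finsupp.linearCombination_apply]
    exact Finsupp.sum_mapRange_index (hf := rfl) fun x => zero_smul _ _
  rw [h1]
  have h3 : ((s a).sum fun x r => ((r, 0) : R₁ × S) • x) = (s a).sum fun i r => r • id i :=
    Finsupp.sum_congr fun x _ => by
      show (((s a x, 0) : R₁ × S)) • x = s a x • id x
      rw [hsmul]; rfl
  rw [h3]
  have h2 := hs a
  rw [Finsupp.linearCombination_apply] at h2
  exact h2

theorem Module.Projective.of_snd {B : Type u} [AddCommGroup B] [Module S B]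
    [Module (R₁ × S) B] (hsmul : ∀ (ρ : R₁ × S) (b : B), ρ • b = ρ.2 • b)
    (h : Module.Projective S B) : Module.Projective (R₁ × S) B := by
  obtain ⟨s, hs⟩ := h.out
  let s' : B →ₗ[R₁ × S] (B →₀ (R₁ × S)) :=
    { toFun := fun a => (s a).mapRange (fun r => ((0, r) : R₁ × S)) rfl
      map_add' := fun a b => by
        rw [map_add]
        exact Finsupp.mapRange_add (fun x y => by rw [Prod.mk_add_mk, add_zero]) _ _
      map_smul' := fun ρ a => by
        dsimp only [RingHom.id_apply]
        rw [hsmul, map_smul]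
        ext x <;>
          simp [Finsupp.mapRange_apply, Finsupp.smul_apply, smul_eq_mul, Prod.fst_mul,
            Prod.snd_mul] }
  refine ⟨s', fun a => ?_⟩
  have h1 : Finsupp.linearCombination (R₁ × S) (id : B → B) (s' a)
      = (s a).sum fun x r => ((0, r) : R₁ × S) • x := by
    rw [Finsupp.linearCombination_apply]
    exact Finsupp.sum_mapRange_index (hf := rfl) fun x => zero_smul _ _
  rw [h1]
  have h3 : ((s a).sum fun x r => ((0, r) : R₁ × S) • x) = (s a).sum fun i r => r • id i :=
    Finsupp.sum_congr fun x _ => by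
      show (((0, s a x) : R₁ × S)) • x = s a x • id x
      rw [hsmul]; rfl
  rw [h3]
  have h2 := hs a
  rw [Finsupp.linearCombination_apply] at h2
  exact h2

/-- product module structure over a product ring -/
def prodModule (A B : Type u) [AddCommGroup A] [Module R₁ A] [AddCommGroup B] [Module S B] :
    Module (R₁ × S) (A × B) :=
  letI : Module (R₁ × S) A := Module.compHom A (RingHom.fst R₁ S)
  letI : Module (R₁ × S) B := Module.compHom B (RingHom.snd R₁ S)
  Prod.instModule

theorem prodModule_smul {A B : Type u} [AddCommGroup A] [Module R₁ A] [AddCommGroup B]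
    [Module S B] (ρ : R₁ × S) (x : A × B) :
    (letI := prodModule (R₁ := R₁) (S := S) A B; ρ • x) = (ρ.1 • x.1, ρ.2 • x.2) := rfl


theorem Module.Projective.punit' {R : Type u} [CommRing R] : Module.Projective R PUnit.{u+1} :=
  ⟨0, fun x => Subsingleton.elim _ _⟩

theorem pdLE_prod : ∀ (n : ℕ) (A B : Type u) [AddCommGroup A] [Module R₁ A]
    [AddCommGroup B] [Module S B], Module.Projective R₁ A → pdLE S n B →
    @pdLE (R₁ × S) _ n (A × B) _ (prodModule A B) := by
  intro n
  induction n with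
  | zero =>
    intro A B _ _ _ _ hA hB
    letI : Module (R₁ × S) A := Module.compHom A (RingHom.fst R₁ S)
    letI : Module (R₁ × S) B := Module.compHom B (RingHom.snd R₁ S)
    haveI hA' : Module.Projective (R₁ × S) A := Module.Projective.of_fst (fun ρ a => rfl) hA
    haveI hB' : Module.Projective (R₁ × S) B :=
      Module.Projective.of_snd (fun ρ b => rfl) hB
    exact (inferInstance : Module.Projective (R₁ × S) (A × B))
  | succ n ih =>
    intro A B _ _ _ _ hA hB
    obtain ⟨Q', _, _, f, hQ', hf, hker⟩ := hB
    letI : Module (R₁ × S) A := Module.compHom A (RingHom.fst R₁ S)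
    letI : Module (R₁ × S) B := Module.compHom B (RingHom.snd R₁ S)
    letI : Module (R₁ × S) Q' := Module.compHom Q' (RingHom.snd R₁ S)
    have hsA : ∀ (ρ : R₁ × S) (a : A), ρ • a = ρ.1 • a := fun _ _ => rfl
    have hsB : ∀ (ρ : R₁ × S) (b : B), ρ • b = ρ.2 • b := fun _ _ => rfl
    have hsQ : ∀ (ρ : R₁ × S) (q : Q'), ρ • q = ρ.2 • q := fun _ _ => rfl
    let g : (A × Q') →ₗ[R₁ × S] (A × B) :=
      { toFun := fun x => (x.1, f x.2)
        map_add' := fun x y => by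
          rw [Prod.snd_add, map_add, Prod.fst_add, Prod.mk_add_mk]
        map_smul' := fun ρ x => by
          dsimp only [RingHom.id_apply]
          rw [Prod.smul_snd, Prod.smul_fst, Prod.smul_mk, hsQ, map_smul, ← hsB] }
    haveI hP' : Module.Projective (R₁ × S) (A × Q') := by
      haveI h1 : Module.Projective (R₁ × S) A := Module.Projective.of_fst (fun ρ a => rfl) hA
      haveI h2 : Module.Projective (R₁ × S) Q' :=
        Module.Projective.of_snd (fun ρ b => rfl) hQ'
      infer_instance
    have hgsurj : Function.Surjective g := by
      rintro ⟨a, b⟩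
      obtain ⟨q, hq⟩ := hf b
      exact ⟨(a, q), by show ((a, q).1, f (a, q).2) = (a, b); rw [hq]⟩
    have hgker : ∀ x : A × Q', g x = 0 ↔ (x.1 = 0 ∧ f x.2 = 0) := fun x => by
      show (x.1, f x.2) = 0 ↔ _
      rw [Prod.ext_iff]
      rfl
    refine ⟨A × Q', inferInstance, prodModule A Q', g, hP', hgsurj, ?_⟩
    have hpd : @pdLE (R₁ × S) _ n (PUnit.{u+1} × ↥(LinearMap.ker f)) _
        (prodModule PUnit.{u+1} ↥(LinearMap.ker f)) :=
      ih PUnit.{u+1} ↥(LinearMap.ker f) Module.Projective.punit' hker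
    letI : Module (R₁ × S) ↥(LinearMap.ker f) :=
      Module.compHom ↥(LinearMap.ker f) (RingHom.snd R₁ S)
    let e : (PUnit.{u+1} × ↥(LinearMap.ker f)) ≃ₗ[R₁ × S] ↥(LinearMap.ker g) :=
      { toFun := fun y => ⟨(0, (y.2 : Q')), by
          rw [LinearMap.mem_ker]
          show (((0 : A), (y.2 : Q')).1, f ((0, (y.2 : Q')).2)) = 0
          rw [Prod.ext_iff]
          exact ⟨rfl, y.2.2⟩⟩
        invFun := fun x => (PUnit.unit, ⟨x.1.2, by
          have h2 := (hgker x.1).1 x.2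
          exact LinearMap.mem_ker.2 h2.2⟩)
        left_inv := fun y => by
          refine Prod.ext (Subsingleton.elim _ _) (Subtype.ext rfl)
        right_inv := fun x => by
          refine Subtype.ext (Prod.ext ?_ rfl)
          exact (((hgker x.1).1 x.2).1).symm
        map_add' := fun y z => by
          refine Subtype.ext (Prod.ext ?_ ?_)
          · show (0 : A) = 0 + 0
            rw [add_zero]
          · rfl
        map_smul' := fun ρ y => by
          refine Subtype.ext (Prod.ext ?_ ?_)
          · show (0 : A) = ρ • (0 : A)
            rw [smul_zero]
          · rfl }
    exact pdLE_congr n hpd e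

end ProdRing

theorem dual_ses' (K : Type u) [Field K] (A : Type u) [AddCommGroup A]
    [Module (DualNumbersRing K) A] :
    ∃ (F : Type u) (_ : AddCommGroup F) (_ : Module (DualNumbersRing K) F)
      (i : A →ₗ[DualNumbersRing K] F) (p : F →ₗ[DualNumbersRing K] A),
      Module.Projective (DualNumbersRing K) F ∧ Function.Injective i ∧
        Function.Surjective p ∧ Function.Exact i p := by
  letI h : Module (AdjoinRoot (Polynomial.X ^ 2 : Polynomial K)) A :=
    ‹Module (DualNumbersRing K) A›
  exact dual_ses K A

/-- Let `R₁ = K[X]/(X²)` and `S` a commutative ring. If every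
`S`-module fits in a short exact sequence `0 → N → Q → N → 0` with `pd_S Q ≤ n`,
then every `(R₁ × S)`-module fits in a short exact sequence `0 → M → P → M → 0`
with `pd_{R₁ × S} P ≤ n`. -/
theorem stmt18 (K : Type u) [Field K] (S : Type u) [CommRing S] (n : ℕ)
    (hS : ∀ (N : Type u) [AddCommGroup N] [Module S N],
      ∃ (Q : Type u) (_ : AddCommGroup Q) (_ : Module S Q)
        (i : N →ₗ[S] Q) (p : Q →ₗ[S] N),
        Function.Injective i ∧ Function.Surjective p ∧ Function.Exact i p ∧ pdLE S n Q) :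
    ∀ (M : Type u) [AddCommGroup M] [Module (DualNumbersRing K × S) M],
      ∃ (P : Type u) (_ : AddCommGroup P) (_ : Module (DualNumbersRing K × S) P)
        (i : M →ₗ[DualNumbersRing K × S] P) (p : P →ₗ[DualNumbersRing K × S] M),
        Function.Injective i ∧ Function.Surjective p ∧ Function.Exact i p ∧
          pdLE (DualNumbersRing K × S) n P := by
  intro M _ _
  set R := DualNumbersRing K × S with hR
  let E1 : M →ₗ[R] M := LinearMap.lsmul R M ((1, 0) : R)
  let E2 : M →ₗ[R] M := LinearMap.lsmul R M ((0, 1) : R)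
  let M₁ := LinearMap.range E1
  let M₂ := LinearMap.range E2
  have hmem1 : ∀ x : M, (((1, 0) : R)) • x ∈ M₁ := fun x => ⟨x, rfl⟩
  have hmem2 : ∀ x : M, (((0, 1) : R)) • x ∈ M₂ := fun x => ⟨x, rfl⟩
  have key1 : ∀ m : M, m ∈ M₁ → (((1, 0) : R)) • m = m := by
    rintro m ⟨x, rfl⟩
    show ((1, 0) : R) • ((1, 0) : R) • x = ((1, 0) : R) • x
    rw [smul_smul, Prod.mk_mul_mk, mul_one, mul_zero]
  have key2 : ∀ m : M, m ∈ M₂ → (((0, 1) : R)) • m = m := by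
    rintro m ⟨x, rfl⟩
    show ((0, 1) : R) • ((0, 1) : R) • x = ((0, 1) : R) • x
    rw [smul_smul, Prod.mk_mul_mk, mul_one, mul_zero]
  have key12 : ∀ m : M, m ∈ M₂ → (((1, 0) : R)) • m = 0 := by
    rintro m ⟨x, rfl⟩
    show ((1, 0) : R) • ((0, 1) : R) • x = 0
    rw [smul_smul, Prod.mk_mul_mk, mul_zero, mul_one]
    exact zero_smul R x
  have key21 : ∀ m : M, m ∈ M₁ → (((0, 1) : R)) • m = 0 := by
    rintro m ⟨x, rfl⟩
    show ((0, 1) : R) • ((1, 0) : R) • x = 0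
    rw [smul_smul, Prod.mk_mul_mk, mul_zero, mul_one]
    exact zero_smul R x
  -- the R₁-module structure on M₁
  letI smul1 : SMul (DualNumbersRing K) ↥M₁ :=
    ⟨fun r m => ⟨((r, (0 : S)) : R) • (m : M), M₁.smul_mem _ m.2⟩⟩
  have hs1 : ∀ (r : DualNumbersRing K) (m : ↥M₁),
      ((r • m : ↥M₁) : M) = ((r, (0 : S)) : R) • (m : M) := fun _ _ => rfl
  letI mod1 : Module (DualNumbersRing K) ↥M₁ := Module.ofMinimalAxioms
    (fun r m m' => Subtype.ext (by
      rw [Submodule.coe_add, hs1, Submodule.coe_add, hs1, hs1, smul_add]))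
    (fun r r' m => Subtype.ext (by
      rw [hs1, Submodule.coe_add, hs1, hs1]
      have h : ((r + r', (0 : S)) : R) = ((r, (0 : S)) : R) + ((r', (0 : S)) : R) := by
        rw [Prod.mk_add_mk, add_zero]
      rw [h, add_smul]))
    (fun r r' m => Subtype.ext (by
      rw [hs1, hs1, hs1, smul_smul, Prod.mk_mul_mk, mul_zero]))
    (fun m => Subtype.ext (by rw [hs1]; exact key1 m m.2))
  letI smul2 : SMul S ↥M₂ :=
    ⟨fun r m => ⟨(((0 : DualNumbersRing K), r) : R) • (m : M), M₂.smul_mem _ m.2⟩⟩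
  have hs2 : ∀ (r : S) (m : ↥M₂),
      ((r • m : ↥M₂) : M) = (((0 : DualNumbersRing K), r) : R) • (m : M) := fun _ _ => rfl
  letI mod2 : Module S ↥M₂ := Module.ofMinimalAxioms
    (fun r m m' => Subtype.ext (by
      rw [Submodule.coe_add, hs2, Submodule.coe_add, hs2, hs2, smul_add]))
    (fun r r' m => Subtype.ext (by
      rw [hs2, Submodule.coe_add, hs2, hs2]
      have h : (((0 : DualNumbersRing K), r + r') : R)
          = (((0 : DualNumbersRing K), r) : R) + (((0 : DualNumbersRing K), r') : R) := by
        rw [Prod.mk_add_mk, add_zero]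
      rw [h, add_smul]))
    (fun r r' m => Subtype.ext (by
      rw [hs2, hs2, hs2, smul_smul, Prod.mk_mul_mk, mul_zero]))
    (fun m => Subtype.ext (by rw [hs2]; exact key2 m m.2))
  -- product structures
  letI modP : Module R (↥M₁ × ↥M₂) := prodModule ↥M₁ ↥M₂
  -- the decomposition equivalence
  let dM : M ≃ₗ[R] (↥M₁ × ↥M₂) :=
    { toFun := fun m => (⟨((1, 0) : R) • m, hmem1 m⟩, ⟨((0, 1) : R) • m, hmem2 m⟩)
      invFun := fun x => (x.1 : M) + (x.2 : M)
      left_inv := fun m => by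
        show (((1, 0) : R)) • m + (((0, 1) : R)) • m = m
        rw [← add_smul, Prod.mk_add_mk, add_zero, zero_add]
        exact one_smul R m
      right_inv := fun x => by
        refine Prod.ext (Subtype.ext ?_) (Subtype.ext ?_)
        · show ((1, 0) : R) • ((x.1 : M) + (x.2 : M)) = (x.1 : M)
          rw [smul_add, key1 _ x.1.2, key12 _ x.2.2, add_zero]
        · show ((0, 1) : R) • ((x.1 : M) + (x.2 : M)) = (x.2 : M)
          rw [smul_add, key2 _ x.2.2, key21 _ x.1.2, zero_add]
      map_add' := fun m m' => by
        refine Prod.ext (Subtype.ext ?_) (Subtype.ext ?_)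
        · show ((1, 0) : R) • (m + m') = ((1, 0) : R) • m + ((1, 0) : R) • m'
          rw [smul_add]
        · show ((0, 1) : R) • (m + m') = ((0, 1) : R) • m + ((0, 1) : R) • m'
          rw [smul_add]
      map_smul' := fun ρ m => by
        refine Prod.ext (Subtype.ext ?_) (Subtype.ext ?_)
        · show ((1, 0) : R) • (ρ • m) = ((ρ.1, (0 : S)) : R) • (((1, 0) : R) • m)
          rw [smul_smul, smul_smul, Prod.mk_mul_mk, Prod.mk_mul_mk, one_mul, zero_mul,
            mul_one, mul_zero]
        · show ((0, 1) : R) • (ρ • m) = (((0 : DualNumbersRing K), ρ.2) : R) • (((0, 1) : R) • m)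
          rw [smul_smul, smul_smul, Prod.mk_mul_mk, Prod.mk_mul_mk, one_mul, zero_mul,
            mul_one, mul_zero] }
  -- get the two short exact sequences
  obtain ⟨F, _, _, iF, pF, hFproj, hFinj, hFsurj, hFexact⟩ := dual_ses' K ↥M₁
  obtain ⟨Q, _, _, iQ, pQ, hQinj, hQsurj, hQexact, hQpd⟩ := hS ↥M₂
  letI modFQ : Module R (F × Q) := prodModule F Q
  -- the product maps
  let iP : (↥M₁ × ↥M₂) →ₗ[R] (F × Q) :=
    { toFun := fun x => (iF x.1, iQ x.2)
      map_add' := fun x y => by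
        rw [Prod.fst_add, Prod.snd_add, map_add, map_add, Prod.mk_add_mk]
      map_smul' := fun ρ x => by
        dsimp only [RingHom.id_apply]
        refine Prod.ext ?_ ?_
        · show iF (ρ.1 • x.1) = ρ.1 • iF x.1
          exact map_smul iF _ _
        · show iQ (ρ.2 • x.2) = ρ.2 • iQ x.2
          exact map_smul iQ _ _ }
  let pP : (F × Q) →ₗ[R] (↥M₁ × ↥M₂) :=
    { toFun := fun x => (pF x.1, pQ x.2)
      map_add' := fun x y => by
        rw [Prod.fst_add, Prod.snd_add, map_add, map_add, Prod.mk_add_mk]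
      map_smul' := fun ρ x => by
        dsimp only [RingHom.id_apply]
        refine Prod.ext ?_ ?_
        · show pF (ρ.1 • x.1) = ρ.1 • pF x.1
          exact map_smul pF _ _
        · show pQ (ρ.2 • x.2) = ρ.2 • pQ x.2
          exact map_smul pQ _ _ }
  -- assemble
  let i : M →ₗ[R] (F × Q) := iP ∘ₗ (dM : M →ₗ[R] (↥M₁ × ↥M₂))
  let p : (F × Q) →ₗ[R] M := (dM.symm : (↥M₁ × ↥M₂) →ₗ[R] M) ∘ₗ pP
  have hiapp : ∀ m : M, i m = (iF (dM m).1, iQ (dM m).2) := fun _ => rfl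
  have hpapp : ∀ w : F × Q, p w = dM.symm (pF w.1, pQ w.2) := fun _ => rfl
  have hinj : Function.Injective i := by
    intro a b hab
    rw [hiapp, hiapp, Prod.ext_iff] at hab
    have h1 : (dM a).1 = (dM b).1 := hFinj hab.1
    have h2 : (dM a).2 = (dM b).2 := hQinj hab.2
    exact dM.injective (Prod.ext h1 h2)
  have hsurj : Function.Surjective p := by
    intro m
    obtain ⟨f, hf⟩ := hFsurj (dM m).1
    obtain ⟨q, hq⟩ := hQsurj (dM m).2
    refine ⟨(f, q), ?_⟩
    rw [hpapp]
    show dM.symm (pF f, pQ q) = m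
    rw [hf, hq]
    exact dM.symm_apply_apply m
  have hexact : Function.Exact i p := by
    intro w
    constructor
    · intro hw
      rw [hpapp] at hw
      have h0 : (pF w.1, pQ w.2) = (0 : ↥M₁ × ↥M₂) := by
        apply dM.symm.injective
        rw [hw, map_zero]
      rw [Prod.ext_iff] at h0
      obtain ⟨a, ha⟩ := (hFexact w.1).1 h0.1
      obtain ⟨b, hb⟩ := (hQexact w.2).1 h0.2
      refine ⟨dM.symm (a, b), ?_⟩
      rw [hiapp, dM.apply_symm_apply]
      exact Prod.ext ha hb
    · rintro ⟨m, rfl⟩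
      rw [hpapp, hiapp]
      have h1 : pF (iF (dM m).1) = 0 := (hFexact _).2 ⟨(dM m).1, rfl⟩
      have h2 : pQ (iQ (dM m).2) = 0 := (hQexact _).2 ⟨(dM m).2, rfl⟩
      rw [show (iF (dM m).1, iQ (dM m).2).1 = iF (dM m).1 from rfl,
        show (iF (dM m).1, iQ (dM m).2).2 = iQ (dM m).2 from rfl, h1, h2]
      exact map_zero _
  have hpd : @pdLE R _ n (F × Q) _ (prodModule F Q) := pdLE_prod n F Q hFproj hQpd
  exact ⟨F × Q, inferInstance, prodModule F Q, i, p, hinj, hsurj, hexact, hpd⟩
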